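/- For every simple graph G on an infinite vertex set κ: (a) for every α ∈ κ, the element v_α has order 7 in H(G); (b) for all distinct α, β ∈ κ: if α and β are adjacent in G then v_α · v_β has order 11 in H(G), and if α and β are not adjacent then v_α · v_β has order 13 in H(G). -/

import Mathlib

/-- The relator set for Williams' group `H(G)` of a simple graph `G`:
`v_α^7` for every vertex `α`; `(v_α v_β)^11` for adjacent `α, β`;
`(v_α v_β)^13` for distinct non-adjacent `α, β`. -/
def grels {V : Type*} (G : SimpleGraph V) : Set (FreeGroup V) :=
  {r | ∃ α : V, r = FreeGroup.of α ^ 7} ∪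
    {r | ∃ α β : V, G.Adj α β ∧ r = (FreeGroup.of α * FreeGroup.of β) ^ 11} ∪
    {r | ∃ α β : V, α ≠ β ∧ ¬ G.Adj α β ∧ r = (FreeGroup.of α * FreeGroup.of β) ^ 13}

/-- Williams' group `H(G)`. -/
abbrev HGrp {V : Type*} (G : SimpleGraph V) := PresentedGroup (grels G)

/-- The generator `v_α` of `H(G)`. -/
def vg {V : Type*} (G : SimpleGraph V) (α : V) : HGrp G := PresentedGroup.of α

/-- `x` and `y` are of the same type: both have order 7, and either both products
`x*y`, `y*x` have order 11, or both have order 13. -/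
def SameT {Γ : Type*} [Group Γ] (x y : Γ) : Prop :=
  orderOf x = 7 ∧ orderOf y = 7 ∧
    ((orderOf (x * y) = 11 ∧ orderOf (y * x) = 11) ∨
      (orderOf (x * y) = 13 ∧ orderOf (y * x) = 13))

/-- `gen x` : there is some `y` of the same type as `x`. -/
def genT {Γ : Type*} [Group Γ] (x : Γ) : Prop := ∃ y, SameT x y

namespace Williams

open Matrix LinearMap Finset

abbrev K : Type := ZMod 2003

def Smat : Matrix (Fin 2) (Fin 2) K := !![0, -1; 1, 1848]
def Amat : Matrix (Fin 2) (Fin 2) K := Smat - 1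
def Badj : Matrix (Fin 2) (Fin 2) K := !![1967, 1573; 2002, 36]
def Bnon : Matrix (Fin 2) (Fin 2) K := !![1368, 277; 2002, 635]

lemma one_add_pow {M N : Type*} [AddCommGroup M] [Module K M] [AddCommGroup N] [Module K N]
    (u : N →ₗ[K] M) (z : M →ₗ[K] N) (e : ℕ) :
    ((1 : Module.End K M) + u ∘ₗ z) ^ e
      = 1 + u ∘ₗ (∑ i ∈ Finset.range e, ((1 : Module.End K N) + z ∘ₗ u) ^ i) ∘ₗ z := by
  induction e with
  | zero => simp
  | succ e ih =>
    set w : Module.End K N := (1 : Module.End K N) + z ∘ₗ u with hw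
    set q : Module.End K N := ∑ i ∈ Finset.range e, w ^ i with hq
    have hsum : (∑ i ∈ Finset.range (e + 1), w ^ i) = 1 + q * w := by
      rw [geom_sum_succ, hq]
      have : w * ∑ i ∈ Finset.range e, w ^ i = (∑ i ∈ Finset.range e, w ^ i) * w := by
        rw [Finset.mul_sum, Finset.sum_mul]
        refine Finset.sum_congr rfl fun i _ => ?_
        rw [← pow_succ, ← pow_succ']
      rw [this, add_comm]
    rw [pow_succ, ih, hsum]
    apply LinearMap.ext; intro m
    simp only [Module.End.mul_apply, LinearMap.add_apply, LinearMap.comp_apply,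
      Module.End.one_apply, map_add, hw]
    abel

section Model

open scoped Classical

variable {V : Type*} (G : SimpleGraph V)

/-- The module on which the model group acts. -/
abbrev MM (V : Type*) : Type _ := (V × Fin 2) →₀ K

/-- Coefficient matrices: `Amat` on the diagonal, `Badj` for adjacent pairs,
`Bnon` for non-adjacent pairs. -/
noncomputable def Coef (γ μ : V) : Matrix (Fin 2) (Fin 2) K :=
  if γ = μ then Amat else if G.Adj γ μ then Badj else Bnon

lemma Coef_self (γ : V) : Coef G γ γ = Amat := if_pos rfl

lemma Coef_adj {γ μ : V} (h : G.Adj γ μ) : Coef G γ μ = Badj := by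
  rw [Coef, if_neg h.ne, if_pos h]

lemma Coef_nonadj {γ μ : V} (hne : γ ≠ μ) (h : ¬ G.Adj γ μ) : Coef G γ μ = Bnon := by
  rw [Coef, if_neg hne, if_neg h]

/-- Embedding of `K²` at coordinate `γ`. -/
noncomputable def Emb (γ : V) : (Fin 2 → K) →ₗ[K] MM V :=
  (Finsupp.lsingle ((γ, 0) : V × Fin 2)).comp (LinearMap.proj (R := K) (φ := fun _ : Fin 2 => K) 0) +
    (Finsupp.lsingle ((γ, 1) : V × Fin 2)).comp (LinearMap.proj (R := K) (φ := fun _ : Fin 2 => K) 1)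

lemma Emb_apply (γ : V) (w : Fin 2 → K) :
    Emb γ w = Finsupp.single ((γ, 0) : V × Fin 2) (w 0) + Finsupp.single ((γ, 1) : V × Fin 2) (w 1) := by
  simp [Emb]

/-- Reading map at vertex `γ`. -/
noncomputable def Th (γ : V) : MM V →ₗ[K] (Fin 2 → K) :=
  Finsupp.lsum K fun q => LinearMap.toSpanSingleton K (Fin 2 → K) (fun j => Coef G γ q.1 j q.2)

lemma Th_single (γ : V) (q : V × Fin 2) (c : K) :
    Th G γ (Finsupp.single q c) = c • fun j => Coef G γ q.1 j q.2 := by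
  simp [Th, Finsupp.lsum_single, LinearMap.toSpanSingleton_apply]

lemma Th_Emb (γ μ : V) (w : Fin 2 → K) :
    Th G γ (Emb μ w) = (Coef G γ μ).mulVec w := by
  rw [Emb_apply, map_add, Th_single, Th_single]
  funext j
  simp [Matrix.mulVec, dotProduct, Fin.sum_univ_two, mul_comm]

/-- The model element attached to vertex `γ`. -/
noncomputable def xv (γ : V) : Module.End K (MM V) := 1 + (Emb γ) ∘ₗ (Th G γ)

lemma xv_pow_seven (γ : V) : (xv G γ) ^ 7 = 1 := by
  rw [xv, one_add_pow]
  have h1 : (Th G γ) ∘ₗ (Emb γ) = Matrix.toLinAlgEquiv' (Coef G γ γ) := by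
    apply LinearMap.ext; intro w
    rw [LinearMap.comp_apply, Th_Emb, Matrix.toLinAlgEquiv'_apply]
  have h2 : (1 : Module.End K (Fin 2 → K)) + Matrix.toLinAlgEquiv' (Coef G γ γ)
      = Matrix.toLinAlgEquiv' Smat := by
    rw [Coef_self, ← map_one (Matrix.toLinAlgEquiv' (R := K) (n := Fin 2)), ← map_add]
    congr 1
    rw [Amat, add_sub_cancel]
  rw [h1, h2]
  have h3 : (∑ i ∈ Finset.range 7, (Matrix.toLinAlgEquiv' Smat : Module.End K (Fin 2 → K)) ^ i)
      = Matrix.toLinAlgEquiv' (∑ i ∈ Finset.range 7, Smat ^ i) := by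
    rw [map_sum]
    exact Finset.sum_congr rfl fun i _ => (map_pow _ _ _).symm
  rw [h3, show (∑ i ∈ Finset.range 7, Smat ^ i) = 0 by decide, map_zero, zero_comp, comp_zero,
    add_zero]

lemma pair_pow (γ δ : V) (hne : γ ≠ δ) (B : Matrix (Fin 2) (Fin 2) K)
    (h1 : Coef G γ δ = B) (h2 : Coef G δ γ = B) (e : ℕ)
    (hmat : ∑ i ∈ Finset.range e,
        ((1 : Matrix (Fin 2 ⊕ Fin 2) (Fin 2 ⊕ Fin 2) K) +
          Matrix.fromBlocks (Amat + B * B) (B + B * Amat) B Amat) ^ i = 0) :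
    (xv G γ * xv G δ) ^ e = 1 := by
  set u : ((Fin 2 ⊕ Fin 2) → K) →ₗ[K] MM V :=
    (Emb γ) ∘ₗ (LinearMap.funLeft K K Sum.inl) + (Emb δ) ∘ₗ (LinearMap.funLeft K K Sum.inr)
    with hu
  set z : MM V →ₗ[K] ((Fin 2 ⊕ Fin 2) → K) :=
    (LinearEquiv.sumArrowLequivProdArrow (Fin 2) (Fin 2) K K).symm.toLinearMap ∘ₗ
      ((Th G γ + (Matrix.toLinAlgEquiv' B) ∘ₗ Th G δ).prod (Th G δ)) with hz
  have hzap : ∀ m : MM V,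
      z m = Sum.elim (Th G γ m + B.mulVec (Th G δ m)) (Th G δ m) := by
    intro m
    simp [hz, LinearEquiv.sumArrowLequivProdArrow, Equiv.sumArrowEquivProdArrow,
      Matrix.toLinAlgEquiv'_apply]
  have huap : ∀ w : (Fin 2 ⊕ Fin 2) → K,
      u w = Emb γ (w ∘ Sum.inl) + Emb δ (w ∘ Sum.inr) := by
    intro w
    simp [hu, LinearMap.funLeft_apply]
    rfl
  have hmul : xv G γ * xv G δ = 1 + u ∘ₗ z := by
    apply LinearMap.ext; intro m
    have expand : (xv G γ * xv G δ) m
        = m + Emb δ (Th G δ m) + Emb γ (Th G γ m)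
            + Emb γ (B.mulVec (Th G δ m)) := by
      simp only [Module.End.mul_apply, xv, LinearMap.add_apply, Module.End.one_apply,
        LinearMap.comp_apply, map_add]
      rw [Th_Emb, h1]
      abel
    rw [expand]
    simp only [LinearMap.add_apply, Module.End.one_apply, LinearMap.comp_apply]
    rw [hzap, huap]
    simp only [Sum.elim_comp_inl, Sum.elim_comp_inr, map_add]
    abel
  have hcomp : z ∘ₗ u
      = Matrix.toLinAlgEquiv' (Matrix.fromBlocks (Amat + B * B) (B + B * Amat) B Amat) := by
    apply LinearMap.ext; intro w
    rw [LinearMap.comp_apply, huap, Matrix.toLinAlgEquiv'_apply, Matrix.fromBlocks_mulVec,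
      hzap]
    have hg : Th G γ (Emb γ (w ∘ Sum.inl) + Emb δ (w ∘ Sum.inr))
        = Amat.mulVec (w ∘ Sum.inl) + B.mulVec (w ∘ Sum.inr) := by
      rw [map_add, Th_Emb, Th_Emb, Coef_self, h1]
    have hd : Th G δ (Emb γ (w ∘ Sum.inl) + Emb δ (w ∘ Sum.inr))
        = B.mulVec (w ∘ Sum.inl) + Amat.mulVec (w ∘ Sum.inr) := by
      rw [map_add, Th_Emb, Th_Emb, Coef_self, h2]
    rw [hg, hd]
    funext j
    cases j <;>
      simp [Matrix.add_mulVec, Matrix.mulVec_add, Matrix.mulVec_mulVec, Matrix.mul_apply,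
        Fin.sum_univ_two] <;>
      ring_nf
  have hone : (1 : Module.End K ((Fin 2 ⊕ Fin 2) → K)) + z ∘ₗ u
      = Matrix.toLinAlgEquiv'
          ((1 : Matrix (Fin 2 ⊕ Fin 2) (Fin 2 ⊕ Fin 2) K)
            + Matrix.fromBlocks (Amat + B * B) (B + B * Amat) B Amat) := by
    rw [map_add, _root_.map_one, hcomp]
  rw [hmul, one_add_pow]
  have h3 : (∑ i ∈ Finset.range e, ((1 : Module.End K ((Fin 2 ⊕ Fin 2) → K)) + z ∘ₗ u) ^ i)
      = Matrix.toLinAlgEquiv' (∑ i ∈ Finset.range e,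
          ((1 : Matrix (Fin 2 ⊕ Fin 2) (Fin 2 ⊕ Fin 2) K)
            + Matrix.fromBlocks (Amat + B * B) (B + B * Amat) B Amat) ^ i) := by
    rw [map_sum]
    exact Finset.sum_congr rfl fun i _ => by rw [hone, map_pow]
  rw [h3, hmat, map_zero, zero_comp, comp_zero, add_zero]

lemma Emb_eval_ne {γ δ : V} (h : γ ≠ δ) (v : Fin 2 → K) (i : Fin 2) :
    Emb γ v ((δ, i) : V × Fin 2) = 0 := by
  simp [Emb_apply, Finsupp.single_apply, Prod.ext_iff, h]

lemma Emb_eval_one (γ : V) (v : Fin 2 → K) : Emb γ v ((γ, 1) : V × Fin 2) = v 1 := by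
  simp [Emb_apply, Finsupp.single_apply, Prod.ext_iff]

lemma Amat_one_zero : Amat 1 0 = 1 := by decide

lemma xv_ne_one (γ : V) : xv G γ ≠ 1 := by
  intro h
  have h0 := congrArg
    (fun f : Module.End K (MM V) => f (Finsupp.single ((γ, 0) : V × Fin 2) (1 : K))
      ((γ, 1) : V × Fin 2)) h
  simp only [xv, LinearMap.add_apply, Module.End.one_apply, LinearMap.comp_apply] at h0
  rw [Th_single, Coef_self, one_smul, Finsupp.add_apply, Emb_eval_one, Amat_one_zero,
    Finsupp.single_eq_of_ne' (by simp [Prod.ext_iff])] at h0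
  revert h0
  decide

lemma xv_mul_ne_one {γ δ : V} (hne : γ ≠ δ) : xv G γ * xv G δ ≠ 1 := by
  intro h
  have h0 := congrArg
    (fun f : Module.End K (MM V) => f (Finsupp.single ((δ, 0) : V × Fin 2) (1 : K))
      ((δ, 1) : V × Fin 2)) h
  simp only [Module.End.mul_apply, xv, LinearMap.add_apply, Module.End.one_apply,
    LinearMap.comp_apply] at h0
  rw [Th_single, Coef_self, one_smul] at h0
  set s : MM V := Finsupp.single ((δ, 0) : V × Fin 2) (1 : K) with hs
  set t : MM V := s + Emb δ fun j => Amat j 0 with ht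
  have hsd : s ((δ, 1) : V × Fin 2) = 0 := by
    rw [hs, Finsupp.single_apply, if_neg (by simp [Prod.ext_iff])]
  have htd : t ((δ, 1) : V × Fin 2) = 1 := by
    rw [ht, Finsupp.add_apply, hsd, Emb_eval_one, Amat_one_zero, zero_add]
  rw [Finsupp.add_apply, Finsupp.add_apply, Emb_eval_ne hne, hsd, Emb_eval_one,
    Amat_one_zero] at h0
  simp only [add_zero, zero_add] at h0
  revert h0
  decide

/-- The model elements as units of the endomorphism ring. -/
noncomputable def xunit (γ : V) : (Module.End K (MM V))ˣ where
  val := xv G γ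
  inv := (xv G γ) ^ 6
  val_inv := by rw [← pow_succ']; exact xv_pow_seven G γ
  inv_val := by rw [← pow_succ]; exact xv_pow_seven G γ

lemma lift_rels : ∀ r ∈ grels G, FreeGroup.lift (xunit G) r = 1 := by
  intro r hr
  simp only [grels, Set.mem_union, Set.mem_setOf_eq] at hr
  rcases hr with (⟨α, rfl⟩ | ⟨α, β, hadj, rfl⟩) | ⟨α, β, hne, hnadj, rfl⟩
  · refine Units.ext ?_
    simp only [_root_.map_pow, FreeGroup.lift_apply_of, Units.val_pow_eq_pow_val, Units.val_one]
    show (xv G α) ^ 7 = 1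
    exact xv_pow_seven G α
  · refine Units.ext ?_
    simp only [_root_.map_pow, _root_.map_mul, FreeGroup.lift_apply_of, Units.val_pow_eq_pow_val,
      Units.val_mul, Units.val_one]
    show (xv G α * xv G β) ^ 11 = 1
    exact pair_pow G α β hadj.ne Badj (Coef_adj G hadj) (Coef_adj G hadj.symm) 11 (by decide)
  · refine Units.ext ?_
    simp only [_root_.map_pow, _root_.map_mul, FreeGroup.lift_apply_of, Units.val_pow_eq_pow_val,
      Units.val_mul, Units.val_one]
    show (xv G α * xv G β) ^ 13 = 1
    exact pair_pow G α β hne Bnon (Coef_nonadj G hne hnadj)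
      (Coef_nonadj G hne.symm fun h => hnadj h.symm) 13 (by decide)

/-- The homomorphism from Williams' group to the model. -/
noncomputable def psi : HGrp G →* (Module.End K (MM V))ˣ :=
  PresentedGroup.toGroup (lift_rels G)

lemma psi_vg (α : V) : psi G (vg G α) = xunit G α :=
  PresentedGroup.toGroup.of (lift_rels G)

lemma vg_ne_one (α : V) : vg G α ≠ 1 := by
  intro h
  have h2 : xunit G α = 1 := by rw [← psi_vg G α, h, _root_.map_one]
  exact xv_ne_one G α (congrArg Units.val h2)

lemma vg_mul_ne_one {α β : V} (hne : α ≠ β) : vg G α * vg G β ≠ 1 := by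
  intro h
  have h2 : xunit G α * xunit G β = 1 := by
    rw [← psi_vg G α, ← psi_vg G β, ← _root_.map_mul, h, _root_.map_one]
  exact xv_mul_ne_one G hne (congrArg Units.val h2)

lemma vg_pow_seven (α : V) : (vg G α) ^ 7 = 1 := by
  have h : (vg G α) ^ 7 = PresentedGroup.mk (grels G) (FreeGroup.of α ^ 7) :=
    (_root_.map_pow (PresentedGroup.mk (grels G)) (FreeGroup.of α) 7).symm
  rw [h]
  exact (QuotientGroup.eq_one_iff _).mpr
    (Subgroup.subset_normalClosure (Or.inl (Or.inl ⟨α, rfl⟩)))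

lemma vg_mul_pow_eleven {α β : V} (hadj : G.Adj α β) : (vg G α * vg G β) ^ 11 = 1 := by
  have h : (vg G α * vg G β) ^ 11
      = PresentedGroup.mk (grels G) ((FreeGroup.of α * FreeGroup.of β) ^ 11) := by
    rw [_root_.map_pow, _root_.map_mul]
    rfl
  rw [h]
  exact (QuotientGroup.eq_one_iff _).mpr
    (Subgroup.subset_normalClosure (Or.inl (Or.inr ⟨α, β, hadj, rfl⟩)))

lemma vg_mul_pow_thirteen {α β : V} (hne : α ≠ β) (hnadj : ¬ G.Adj α β) :
    (vg G α * vg G β) ^ 13 = 1 := by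
  have h : (vg G α * vg G β) ^ 13
      = PresentedGroup.mk (grels G) ((FreeGroup.of α * FreeGroup.of β) ^ 13) := by
    rw [_root_.map_pow, _root_.map_mul]
    rfl
  rw [h]
  exact (QuotientGroup.eq_one_iff _).mpr
    (Subgroup.subset_normalClosure (Or.inr ⟨α, β, hne, hnadj, rfl⟩))

end Model

end Williams

/-- (a) each `v_α` has order 7 in `H(G)`; (b) for distinct `α, β`: if adjacent then
`v_α * v_β` has order 11, and if non-adjacent then it has order 13. -/
theorem stmt10 {V : Type*} [Infinite V] (G : SimpleGraph V) :
    (∀ α : V, orderOf (vg G α) = 7) ∧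
      (∀ α β : V, α ≠ β →
        (G.Adj α β → orderOf (vg G α * vg G β) = 11) ∧
        (¬ G.Adj α β → orderOf (vg G α * vg G β) = 13)) := by
  constructor
  · intro α
    haveI : Fact (Nat.Prime 7) := ⟨by norm_num⟩
    exact orderOf_eq_prime (Williams.vg_pow_seven G α) (Williams.vg_ne_one G α)
  · intro α β hne
    constructor
    · intro hadj
      haveI : Fact (Nat.Prime 11) := ⟨by norm_num⟩
      exact orderOf_eq_prime (Williams.vg_mul_pow_eleven G hadj) (Williams.vg_mul_ne_one G hne)
    · intro hnadj
      haveI : Fact (Nat.Prime 13) := ⟨by norm_num⟩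
      exact orderOf_eq_prime (Williams.vg_mul_pow_thirteen G hne hnadj)
        (Williams.vg_mul_ne_one G hne)
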